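/- Let χ : [0,1] → ℝ be continuous and suppose there exists c > 0 with χ(x) ≥ c for all x ∈ [0,1]. Then there exists a constant λ > 0 such that for every continuously differentiable function v : [0,1] → ℝ with v(1) = 0 one has λ · ∫₀¹ x·χ(x)·v(x)² dx ≤ ∫₀¹ x·χ(x)·(v'(x))² dx. -/

import Mathlib

open Set intervalIntegral MeasureTheory

/-- Cauchy–Schwarz-type estimate via quadratic discriminant. -/
lemma weighted_poincare_cs (g : ℝ → ℝ) (hg : ContinuousOn g (Set.Icc 0 1))
    {x : ℝ} (hx0 : 0 < x) (hx1 : x ≤ 1) :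
    (∫ t in x..1, g t) ^ 2 ≤ (-Real.log x) * ∫ t in x..1, t * g t ^ 2 := by
  set L := -Real.log x with hLdef
  set I := ∫ t in x..1, t * g t ^ 2 with hIdef
  have hIcc : Set.Icc x 1 ⊆ Set.Icc (0:ℝ) 1 := Set.Icc_subset_Icc hx0.le le_rfl
  have hgx : ContinuousOn g (Set.Icc x 1) := hg.mono hIcc
  have hL : 0 ≤ L := neg_nonneg.2 (Real.log_nonpos hx0.le hx1)
  have hI : 0 ≤ I := intervalIntegral.integral_nonneg hx1
    (fun t ht => mul_nonneg (hx0.le.trans ht.1) (sq_nonneg _))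
  set S := ∫ t in x..1, |g t| with hSdef
  have hS0 : 0 ≤ S := intervalIntegral.integral_nonneg hx1 (fun t _ => abs_nonneg _)
  have hSabs : |∫ t in x..1, g t| ≤ S :=
    intervalIntegral.abs_integral_le_integral_abs hx1
  -- ∫ 1/t = L
  have hlog : (∫ t in x..1, 1 / t) = L := by
    rw [integral_one_div (by
      rw [Set.uIcc_of_le hx1]
      intro h
      exact absurd h.1 (not_le.2 hx0))]
    rw [hLdef, one_div, Real.log_inv]
  -- key bound for each A > 0
  have key : ∀ A : ℝ, 0 < A → S ≤ A / 2 * L + I / (2 * A) := by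
    intro A hA
    have hint1 : IntervalIntegrable (fun t => |g t|) MeasureTheory.volume x 1 :=
      (hgx.abs).intervalIntegrable_of_Icc hx1
    have hc2 : ContinuousOn (fun t : ℝ => A / 2 * (1 / t) + 1 / (2 * A) * (t * g t ^ 2))
        (Set.Icc x 1) := by
      apply ContinuousOn.add
      · exact continuousOn_const.mul (continuousOn_const.div continuousOn_id
          (fun t ht => (hx0.trans_le ht.1).ne'))
      · exact continuousOn_const.mul (continuousOn_id.mul (hgx.pow 2))
    have hint2 : IntervalIntegrable
        (fun t : ℝ => A / 2 * (1 / t) + 1 / (2 * A) * (t * g t ^ 2))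
        MeasureTheory.volume x 1 := hc2.intervalIntegrable_of_Icc hx1
    have hmono : S ≤ ∫ t in x..1, (A / 2 * (1 / t) + 1 / (2 * A) * (t * g t ^ 2)) := by
      apply intervalIntegral.integral_mono_on hx1 hint1 hint2
      intro t ht
      have ht0 : 0 < t := hx0.trans_le ht.1
      have key0 : |g t| * (2 * t * A) ≤
          (A / 2 * (1 / t) + 1 / (2 * A) * (t * g t ^ 2)) * (2 * t * A) := by
        have hexp : (A / 2 * (1 / t) + 1 / (2 * A) * (t * g t ^ 2)) * (2 * t * A)
            = A ^ 2 + t ^ 2 * g t ^ 2 := by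
          field_simp
        rw [hexp]
        nlinarith [sq_nonneg (A - t * |g t|), sq_abs (g t), abs_nonneg (g t)]
      exact le_of_mul_le_mul_right key0 (by positivity)
    have hsplit : (∫ t in x..1, (A / 2 * (1 / t) + 1 / (2 * A) * (t * g t ^ 2)))
        = A / 2 * L + I / (2 * A) := by
      have hi1 : IntervalIntegrable (fun t : ℝ => A / 2 * (1 / t))
          MeasureTheory.volume x 1 := by
        apply ContinuousOn.intervalIntegrable_of_Icc hx1
        exact ContinuousOn.mul continuousOn_const
          (continuousOn_const.div continuousOn_id (fun t ht => (hx0.trans_le ht.1).ne'))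
      have hi2 : IntervalIntegrable (fun t : ℝ => 1 / (2 * A) * (t * g t ^ 2))
          MeasureTheory.volume x 1 := by
        apply ContinuousOn.intervalIntegrable_of_Icc hx1
        exact ContinuousOn.mul continuousOn_const (continuousOn_id.mul (hgx.pow 2))
      rw [intervalIntegral.integral_add hi1 hi2,
        intervalIntegral.integral_const_mul, intervalIntegral.integral_const_mul,
        hlog, ← hIdef]
      ring
    calc S ≤ _ := hmono
    _ = A / 2 * L + I / (2 * A) := hsplit
  -- quadratic nonnegativity
  have quad : ∀ A : ℝ, 0 ≤ L * (A * A) + (-2 * S) * A + I := by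
    intro A
    rcases le_or_gt A 0 with hA | hA
    · nlinarith [mul_nonneg hL (mul_self_nonneg A), mul_nonneg hS0 (neg_nonneg.2 hA)]
    · have hk := key A hA
      have h2A : 0 < 2 * A := by positivity
      have h5 : 2 * A * S ≤ 2 * A * (A / 2 * L + I / (2 * A)) :=
        mul_le_mul_of_nonneg_left hk h2A.le
      have h6 : 2 * A * (A / 2 * L + I / (2 * A)) = A * A * L + I := by
        field_simp
      rw [h6] at h5
      nlinarith
  have hd := discrim_le_zero quad
  rw [discrim] at hd
  have hSLI : S ^ 2 ≤ L * I := by nlinarith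
  nlinarith [hSabs, hS0, abs_nonneg (∫ t in x..1, g t), sq_abs (∫ t in x..1, g t)]

/-- Weighted Poincaré inequality on (0,1) with weight w(x) = x·χ(x), where the
continuous diffusivity χ is bounded below by a positive constant, for continuously
differentiable functions vanishing at the right endpoint. -/
theorem weighted_poincare
    (χ : ℝ → ℝ) (hχ : ContinuousOn χ (Set.Icc 0 1))
    (c : ℝ) (hc : 0 < c) (hχc : ∀ x ∈ Set.Icc (0:ℝ) 1, c ≤ χ x) :
    ∃ lam : ℝ, 0 < lam ∧
      ∀ v : ℝ → ℝ, ContDiffOn ℝ 1 v (Set.Icc 0 1) → v 1 = 0 →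
        lam * ∫ x in (0:ℝ)..1, x * χ x * (v x) ^ 2
          ≤ ∫ x in (0:ℝ)..1, x * χ x * (deriv v x) ^ 2 := by
  -- maximum of χ
  obtain ⟨x₀, hx₀, hmax⟩ := isCompact_Icc.exists_isMaxOn (Set.nonempty_Icc.2 zero_le_one) hχ
  set C := χ x₀ with hCdef
  have hC : 0 < C := hc.trans_le (hχc x₀ hx₀)
  have hCle : ∀ x ∈ Set.Icc (0:ℝ) 1, χ x ≤ C := fun x hx => hmax hx
  refine ⟨c / C, by positivity, ?_⟩
  intro v hv hv1
  set g := derivWithin v (Set.Icc (0:ℝ) 1) with hgdef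
  have hgc : ContinuousOn g (Set.Icc 0 1) :=
    hv.continuousOn_derivWithin (uniqueDiffOn_Icc one_pos) le_rfl
  have hvc : ContinuousOn v (Set.Icc 0 1) := hv.continuousOn
  have hgeq : ∀ t ∈ Set.Ioo (0:ℝ) 1, deriv v t = g t := by
    intro t ht
    exact (derivWithin_of_mem_nhds (Icc_mem_nhds ht.1 ht.2)).symm
  have hderiv : ∀ t ∈ Set.Ioo (0:ℝ) 1, HasDerivAt v (g t) t := by
    intro t ht
    have h1 : Set.Icc (0:ℝ) 1 ∈ nhds t := Icc_mem_nhds ht.1 ht.2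
    have h2 : DifferentiableAt ℝ v t :=
      ((hv.differentiableOn one_ne_zero) t (mem_of_mem_nhds h1)).differentiableAt h1
    rw [← hgeq t ht]
    exact h2.hasDerivAt
  -- FTC
  have hftc : ∀ x ∈ Set.Icc (0:ℝ) 1, v x = -∫ t in x..1, g t := by
    intro x hx
    have h := intervalIntegral.integral_eq_sub_of_hasDeriv_right_of_le hx.2
      (hvc.mono (Set.Icc_subset_Icc hx.1 le_rfl))
      (fun t ht => (hderiv t ⟨hx.1.trans_lt ht.1, ht.2⟩).hasDerivWithinAt)
      ((hgc.mono (Set.Icc_subset_Icc hx.1 le_rfl)).intervalIntegrable_of_Icc hx.2)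
    rw [hv1] at h
    linarith [h]
  set I := ∫ t in (0:ℝ)..1, t * g t ^ 2 with hIdef
  have hInt_tg : IntervalIntegrable (fun t : ℝ => t * g t ^ 2) MeasureTheory.volume 0 1 :=
    (continuousOn_id.mul (hgc.pow 2)).intervalIntegrable_of_Icc zero_le_one
  have hI0 : 0 ≤ I := intervalIntegral.integral_nonneg zero_le_one
    (fun t ht => mul_nonneg ht.1 (sq_nonneg _))
  -- pointwise bound
  have hpt : ∀ x ∈ Set.Icc (0:ℝ) 1, x * v x ^ 2 ≤ I := by
    intro x hx
    rcases eq_or_lt_of_le hx.1 with h0 | h0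
    · simp [← h0, hI0]
    · have hsub : (∫ t in x..1, t * g t ^ 2) ≤ I := by
        apply intervalIntegral.integral_mono_interval hx.1 hx.2 le_rfl ?_ hInt_tg
        filter_upwards [MeasureTheory.ae_restrict_mem measurableSet_Ioc] with t ht
        exact mul_nonneg ht.1.le (sq_nonneg _)
      have hcs := weighted_poincare_cs g hgc h0 hx.2
      have hv2 : v x ^ 2 = (∫ t in x..1, g t) ^ 2 := by
        rw [hftc x hx]; ring
      have hLn : 0 ≤ -Real.log x := neg_nonneg.2 (Real.log_nonpos h0.le hx.2)
      have h1 : v x ^ 2 ≤ (-Real.log x) * I := by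
        rw [hv2]
        exact hcs.trans (mul_le_mul_of_nonneg_left hsub hLn)
      have hxlog : x * (-Real.log x) ≤ 1 := by
        have := Real.log_le_sub_one_of_pos (inv_pos.2 h0)
        rw [Real.log_inv] at this
        have h2 : -Real.log x ≤ x⁻¹ - 1 := this
        have h3 : x * (-Real.log x) ≤ x * (x⁻¹ - 1) :=
          mul_le_mul_of_nonneg_left h2 h0.le
        have h4 : x * (x⁻¹ - 1) = 1 - x := by field_simp
        linarith
      calc x * v x ^ 2 ≤ x * ((-Real.log x) * I) :=
            mul_le_mul_of_nonneg_left h1 h0.le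
        _ = (x * (-Real.log x)) * I := by ring
        _ ≤ 1 * I := mul_le_mul_of_nonneg_right hxlog hI0
        _ = I := one_mul I
  -- LHS estimate
  have hLHS : (∫ x in (0:ℝ)..1, x * χ x * v x ^ 2) ≤ C * I := by
    have hint1 : IntervalIntegrable (fun x : ℝ => x * χ x * v x ^ 2)
        MeasureTheory.volume 0 1 :=
      ((continuousOn_id.mul hχ).mul (hvc.pow 2)).intervalIntegrable_of_Icc zero_le_one
    calc (∫ x in (0:ℝ)..1, x * χ x * v x ^ 2) ≤ ∫ _x in (0:ℝ)..1, C * I := by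
          apply intervalIntegral.integral_mono_on zero_le_one hint1
            intervalIntegrable_const
          intro x hx
          have h1 : x * χ x * v x ^ 2 ≤ C * (x * v x ^ 2) := by
            have := hCle x hx
            nlinarith [hx.1, sq_nonneg (v x), mul_nonneg hx.1 (sq_nonneg (v x))]
          exact h1.trans (mul_le_mul_of_nonneg_left (hpt x hx) hC.le)
      _ = C * I := by simp
  -- RHS estimate
  have hRHSeq : (∫ x in (0:ℝ)..1, x * χ x * (deriv v x) ^ 2)
      = ∫ x in (0:ℝ)..1, x * χ x * g x ^ 2 := by
    apply intervalIntegral.integral_congr_ae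
    have hne : ∀ᵐ x : ℝ ∂MeasureTheory.volume, x ≠ 1 := by
      rw [MeasureTheory.ae_iff]
      have : {x : ℝ | ¬ x ≠ 1} = {1} := by ext y; simp
      rw [this]
      exact MeasureTheory.measure_singleton 1
    filter_upwards [hne] with x hx hmem
    rw [Set.uIoc_of_le zero_le_one] at hmem
    rw [hgeq x ⟨hmem.1, lt_of_le_of_ne hmem.2 hx⟩]
  have hRHS : c * I ≤ ∫ x in (0:ℝ)..1, x * χ x * g x ^ 2 := by
    have hint2 : IntervalIntegrable (fun x : ℝ => x * χ x * g x ^ 2)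
        MeasureTheory.volume 0 1 :=
      ((continuousOn_id.mul hχ).mul (hgc.pow 2)).intervalIntegrable_of_Icc zero_le_one
    have : (∫ x in (0:ℝ)..1, c * (x * g x ^ 2)) ≤ ∫ x in (0:ℝ)..1, x * χ x * g x ^ 2 := by
      apply intervalIntegral.integral_mono_on zero_le_one (hInt_tg.const_mul c) hint2
      intro x hx
      have := hχc x hx
      nlinarith [hx.1, sq_nonneg (g x), mul_nonneg hx.1 (sq_nonneg (g x))]
    rwa [intervalIntegral.integral_const_mul] at this
  -- conclude
  rw [hRHSeq]
  calc c / C * ∫ x in (0:ℝ)..1, x * χ x * v x ^ 2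
      ≤ c / C * (C * I) := mul_le_mul_of_nonneg_left hLHS (by positivity)
    _ = c * I := by field_simp
    _ ≤ _ := hRHS
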